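/- arXiv:2110.15694 — 5 statements merged into one kernel-verified Lean document; each statement's English description precedes it below -/
import Mathlib

section
/- Let M be a σ-compact, locally compact metric space and let T : C(M, ℝ) → ℝ be a linear functional that is continuous for the compact-open topology. Then T is a pointwise limit of finite linear combinations of point-evaluation functionals: there exist functionals T_n, each of the form f ↦ Σ_{i=1}^{k_n} a_{n,i} f(x_{n,i}) with a_{n,i} ∈ ℝ and x_{n,i} ∈ M, such that T_n(f) → T(f) for every f ∈ C(M, ℝ). -/
open Filter Topology Metric

/-- Auxiliary: on a compact nonempty set `Kn`, there is a finite family of nonnegative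
continuous functions summing to `1` on `Kn`, each supported in an `ε`-ball. -/
lemma stmt_4_aux {M : Type*} [MetricSpace M] (Kn : Set M) (hKn : IsCompact Kn)
    (hne : Kn.Nonempty) {ε : ℝ} (hε : 0 < ε) :
    ∃ (k : ℕ) (φ : Fin k → C(M, ℝ)) (x : Fin k → M),
      (∀ y ∈ Kn, ∑ i, φ i y = 1) ∧ (∀ i y, 0 ≤ φ i y) ∧
        (∀ i y, φ i y ≠ 0 → dist y (x i) < ε) := by
  obtain ⟨t, ht⟩ := hKn.elim_finite_subcover (fun x : M => Metric.ball x ε)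
    (fun _ => Metric.isOpen_ball) (fun y _ => Set.mem_iUnion.2 ⟨y, Metric.mem_ball_self hε⟩)
  set ψ : M → M → ℝ := fun x y => max (ε - dist y x) 0 with hψ
  have hψc : ∀ x : M, Continuous (ψ x) := fun x =>
    (continuous_const.sub (continuous_id.dist continuous_const)).max continuous_const
  have hψ0 : ∀ x y, 0 ≤ ψ x y := fun x y => le_max_right _ _
  set S : M → ℝ := fun y => ∑ x ∈ t, ψ x y with hS
  have hSc : Continuous S := continuous_finset_sum _ fun x _ => hψc x
  have hSpos : ∀ y ∈ Kn, 0 < S y := by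
    intro y hy
    obtain ⟨x, hxt, hxy⟩ := Set.mem_iUnion₂.1 (ht hy)
    refine Finset.sum_pos' (fun i _ => hψ0 i y) ⟨x, hxt, ?_⟩
    have hlt : dist y x < ε := Metric.mem_ball.1 hxy
    simp only [hψ, lt_max_iff]
    left; linarith
  obtain ⟨y₀, hy₀, hmin⟩ := hKn.exists_isMinOn hne hSc.continuousOn
  set δ₀ : ℝ := S y₀ with hδ₀def
  have hδ₀ : 0 < δ₀ := hSpos y₀ hy₀
  set D : M → ℝ := fun y => max (S y) δ₀ with hD
  have hDc : Continuous D := hSc.max continuous_const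
  have hDpos : ∀ y, 0 < D y := fun y => lt_of_lt_of_le hδ₀ (le_max_right _ _)
  have e := t.equivFin
  refine ⟨t.card, fun i => ⟨fun y => ψ (e.symm i : M) y / D y,
      (hψc _).div hDc fun y => (hDpos y).ne'⟩, fun i => (e.symm i : M), ?_, ?_, ?_⟩
  · intro y hy
    have hsum : ∑ i : Fin t.card, ψ (e.symm i : M) y = S y := by
      rw [Equiv.sum_comp e.symm (fun a : t => ψ (a : M) y),
        Finset.sum_coe_sort t (fun x => ψ x y)]
    have hSy : δ₀ ≤ S y := hmin hy
    have hDy : D y = S y := max_eq_left hSy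
    simp only [ContinuousMap.coe_mk]
    rw [← Finset.sum_div, hsum, hDy, div_self (hSpos y hy).ne']
  · intro i y
    exact div_nonneg (hψ0 _ y) (hDpos y).le
  · intro i y hne'
    simp only [ContinuousMap.coe_mk] at hne'
    by_contra hdist
    push_neg at hdist
    have : ψ (e.symm i : M) y = 0 := max_eq_right (by linarith)
    rw [this, zero_div] at hne'
    exact hne' rfl

/-- Every linear functional `T` on `C(M, ℝ)` (compact-open topology,
`M` a σ-compact locally compact metric space) that is continuous is a pointwise limit of
finite linear combinations of point-evaluation functionals. -/
theorem stmt_4 {M : Type*} [MetricSpace M] [SigmaCompactSpace M] [LocallyCompactSpace M]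
    (T : C(M, ℝ) →ₗ[ℝ] ℝ) (hT : Continuous T) :
    ∃ (k : ℕ → ℕ) (a : ∀ n, Fin (k n) → ℝ) (x : ∀ n, Fin (k n) → M),
      ∀ f : C(M, ℝ),
        Tendsto (fun n => ∑ i, a n i * f (x n i)) atTop (𝓝 (T f)) := by
  by_cases hM : Nonempty M
  case neg =>
    -- `M` is empty, so `C(M, ℝ)` is a subsingleton and `T f = T 0 = 0`.
    refine ⟨fun _ => 0, fun _ => Fin.elim0, fun _ => Fin.elim0, fun f => ?_⟩
    have : f = 0 := by
      ext y; exact absurd ⟨y⟩ hM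
    rw [this, map_zero]
    simpa using tendsto_const_nhds
  obtain ⟨pt⟩ := hM
  set K : CompactExhaustion M := CompactExhaustion.choice M with hKdef
  -- For each `n`, get a partition-of-unity-like family on `insert pt (K n)`.
  have hA : ∀ n : ℕ, ∃ (k : ℕ) (φ : Fin k → C(M, ℝ)) (x : Fin k → M),
      (∀ y ∈ insert pt (K n), ∑ i, φ i y = 1) ∧ (∀ i y, 0 ≤ φ i y) ∧
        (∀ i y, φ i y ≠ 0 → dist y (x i) < 1 / (n + 1)) := by
    intro n
    exact stmt_4_aux _ ((K.isCompact n).insert pt) ⟨pt, Set.mem_insert _ _⟩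
      (by positivity)
  choose k φ x h1 h2 h3 using hA
  refine ⟨k, fun n i => T (φ n i), x, fun f => ?_⟩
  have key : ∀ n, ∑ i, T (φ n i) * f (x n i) = T (∑ i, f (x n i) • φ n i) := by
    intro n
    rw [map_sum]
    exact Finset.sum_congr rfl fun i _ => by rw [map_smul, smul_eq_mul, mul_comm]
  simp only [key]
  -- It suffices to show `∑ i, f (x n i) • φ n i → f` in the compact-open topology.
  have hconv : Tendsto (fun n => ∑ i, f (x n i) • φ n i) atTop (𝓝 f) := by
    rw [ContinuousMap.tendsto_iff_forall_isCompact_tendstoUniformlyOn]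
    intro C hC
    rw [Metric.tendstoUniformlyOn_iff]
    intro ε hε
    -- Find `m` with `C ⊆ K m`, and a thickening of `C` inside `K (m + 1)`.
    obtain ⟨m, hm⟩ := K.exists_superset_of_isCompact hC
    obtain ⟨δ, hδ, hδsub⟩ := hC.exists_thickening_subset_open isOpen_interior
      (hm.trans (K.subset_interior_succ m))
    -- `f` is uniformly continuous on the compact set `K (m + 1)`.
    have hucf : UniformContinuousOn f (K (m + 1)) :=
      (K.isCompact (m + 1)).uniformContinuousOn_of_continuous f.continuous.continuousOn
    rw [Metric.uniformContinuousOn_iff] at hucf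
    obtain ⟨δ', hδ', hδ'f⟩ := hucf (ε / 2) (by linarith)
    -- Choose `N` large enough.
    obtain ⟨N, hN⟩ := exists_nat_gt (max (1 / min δ δ') m)
    have hminpos : 0 < min δ δ' := lt_min hδ hδ'
    filter_upwards [eventually_ge_atTop N] with n hn
    intro y hy
    have hmn : m ≤ n := by
      have : (m : ℝ) ≤ N := le_of_lt (lt_of_le_of_lt (le_max_right _ _) hN)
      exact_mod_cast this.trans (Nat.cast_le.2 hn)
    have hsmall : 1 / ((n : ℝ) + 1) < min δ δ' := by
      have hNpos : 1 / min δ δ' < (N : ℝ) := lt_of_le_of_lt (le_max_left _ _) hN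
      have hn1 : (N : ℝ) ≤ (n : ℝ) + 1 := by exact_mod_cast Nat.le_succ_of_le hn
      have hn1pos : (0 : ℝ) < (n : ℝ) + 1 := by positivity
      rw [div_lt_iff₀ hn1pos]
      have h2' : 1 / min δ δ' < (n : ℝ) + 1 := hNpos.trans_le hn1
      rw [div_lt_iff₀ hminpos] at h2'
      rw [mul_comm]
      exact h2'
    -- `y ∈ K n`, so the partition sums to 1 at `y`.
    have hyKn : y ∈ insert pt (K n) := Set.mem_insert_of_mem _ (K.subset hmn (hm hy))
    have hsum1 : ∑ i, φ n i y = 1 := h1 n y hyKn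
    have happ : (∑ i, f (x n i) • φ n i) y = ∑ i, f (x n i) * φ n i y := by
      simp [ContinuousMap.coe_sum]
    rw [dist_comm, Real.dist_eq, happ]
    have hdiff : (∑ i, f (x n i) * φ n i y) - f y
        = ∑ i, φ n i y * (f (x n i) - f y) :=
      calc (∑ i, f (x n i) * φ n i y) - f y
          = ∑ i, φ n i y * f (x n i) - (∑ i, φ n i y) * f y := by
            rw [hsum1, one_mul]
            congr 1
            exact Finset.sum_congr rfl fun i _ => mul_comm _ _
        _ = ∑ i, φ n i y * (f (x n i) - f y) := by
            rw [Finset.sum_mul, ← Finset.sum_sub_distrib]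
            exact Finset.sum_congr rfl fun i _ => by ring
    rw [hdiff]
    -- Each term is bounded by `φ n i y * (ε / 2)`.
    have hterm : ∀ i, |φ n i y * (f (x n i) - f y)| ≤ φ n i y * (ε / 2) := by
      intro i
      by_cases hzero : φ n i y = 0
      · simp [hzero]
      · have hdist : dist y (x n i) < 1 / (n + 1) := h3 n i y hzero
        have hd : dist y (x n i) < min δ δ' := hdist.trans hsmall
        have hxK : x n i ∈ K (m + 1) := by
          have : x n i ∈ thickening δ C :=
            mem_thickening_iff.2 ⟨y, hy, by rw [dist_comm]; exact hd.trans_le (min_le_left _ _)⟩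
          exact interior_subset (hδsub this)
        have hyK : y ∈ K (m + 1) := hm.trans (K.subset (Nat.le_succ m)) hy
        have hle : |f (x n i) - f y| ≤ ε / 2 := by
          have := hδ'f (x n i) hxK y hyK (by rw [dist_comm]; exact hd.trans_le (min_le_right _ _))
          rw [Real.dist_eq] at this
          exact this.le
        rw [abs_mul, abs_of_nonneg (h2 n i y)]
        exact mul_le_mul_of_nonneg_left hle (h2 n i y)
    calc |∑ i, φ n i y * (f (x n i) - f y)|
        ≤ ∑ i, |φ n i y * (f (x n i) - f y)| := Finset.abs_sum_le_sum_abs _ _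
      _ ≤ ∑ i, φ n i y * (ε / 2) := Finset.sum_le_sum fun i _ => hterm i
      _ = ε / 2 := by rw [← Finset.sum_mul, hsum1, one_mul]
      _ < ε := by linarith
  exact (hT.tendsto f).comp hconv
end

section
/- Let F be a separable real Banach space, let (f_n)_{n ∈ ℕ} be a sequence in F, and let (ξ_n)_{n ∈ ℕ} be a sequence of independent standard Gaussian random variables on a probability space (Ω, 𝔖, P). Assume that the partial sums Σ_{n ≤ N} ξ_n f_n converge almost surely in F, as N → ∞, to a random element X of F. Then the topological support of the law of X equals the closed linear span of {f_n : n ∈ ℕ} in F. -/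
open MeasureTheory ProbabilityTheory Filter Topology

lemma gaussianReal_ball_pos (a δ : ℝ) (hδ : 0 < δ) :
    0 < gaussianReal 0 1 (Metric.ball a δ) := by
  rw [pos_iff_ne_zero]
  intro h
  have h2 := gaussianReal_absolutelyContinuous' 0 (v := 1) one_ne_zero h
  rw [Real.volume_ball] at h2
  simp only [ENNReal.ofReal_eq_zero] at h2
  linarith

lemma key_ball_pos {F : Type*} [NormedAddCommGroup F] [NormedSpace ℝ F]
    [MeasurableSpace F] [BorelSpace F] [SecondCountableTopology F]
    {Ω : Type*} [MeasurableSpace Ω] (P : Measure Ω) [IsProbabilityMeasure P]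
    (f : ℕ → F) (ξ : ℕ → Ω → ℝ)
    (hmeas : ∀ n, Measurable (ξ n))
    (hlaw : ∀ n, Measure.map (ξ n) P = gaussianReal 0 1)
    (hindep : iIndepFun ξ P)
    (X : Ω → F)
    (hconv : ∀ᵐ ω ∂P,
      Tendsto (fun N => ∑ n ∈ Finset.range N, ξ n ω • f n) atTop (𝓝 (X ω)))
    (y : F) (hy : y ∈ Submodule.span ℝ (Set.range f)) {ε : ℝ} (hε : 0 < ε) :
    0 < P {ω | ‖X ω - y‖ < ε} := by
  classical
  set S : ℕ → Ω → F := fun N ω => ∑ n ∈ Finset.range N, ξ n ω • f n with hS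
  -- represent y
  rw [Finsupp.mem_span_range_iff_exists_finsupp] at hy
  obtain ⟨c, hc⟩ := hy
  obtain ⟨N₀, hN₀⟩ := c.support.exists_nat_subset_range
  -- tail events
  set D : ℕ → Set Ω := fun N =>
    {ω | ∀ a b : ℕ, N ≤ a → ‖∑ n ∈ Finset.Ico a b, ξ n ω • f n‖ ≤ ε / 4} with hD
  -- tail σ-algebras
  set m2 : ℕ → MeasurableSpace Ω := fun N => ⨆ n ∈ {k : ℕ | N ≤ k},
    MeasurableSpace.comap (ξ n) inferInstance with hm2
  have hm2le : ∀ N, m2 N ≤ ‹MeasurableSpace Ω› := fun N =>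
    iSup₂_le fun n _ => (hmeas n).comap_le
  have hmeas_tail : ∀ N a b : ℕ, N ≤ a →
      Measurable[m2 N] fun ω => ∑ n ∈ Finset.Ico a b, ξ n ω • f n := by
    intro N a b hab
    refine Finset.measurable_sum _ fun n hn => ?_
    have hn' : N ≤ n := le_trans hab (Finset.mem_Ico.mp hn).1
    have : Measurable[m2 N] (ξ n) :=
      measurable_iff_comap_le.mpr (le_iSup₂ (f := fun n (_ : n ∈ {k : ℕ | N ≤ k}) =>
        MeasurableSpace.comap (ξ n) inferInstance) n hn')
    exact this.smul_const (f n)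
  have hDm2 : ∀ N, MeasurableSet[m2 N] (D N) := by
    intro N
    have : D N = ⋂ (a : ℕ) (b : ℕ),
        {ω | N ≤ a → ‖∑ n ∈ Finset.Ico a b, ξ n ω • f n‖ ≤ ε / 4} := by
      ext ω; simp [hD, Set.mem_iInter]
    rw [this]
    refine MeasurableSet.iInter fun a => MeasurableSet.iInter fun b => ?_
    by_cases hab : N ≤ a
    · simp only [hab, true_implies]
      exact (measurable_norm.comp (hmeas_tail N a b hab)) measurableSet_Iic
    · simp only [hab, false_implies]
      exact MeasurableSet.univ
  have hDmeas : ∀ N, MeasurableSet (D N) := fun N => hm2le N _ (hDm2 N)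
  have hDmono : Monotone D := by
    intro N M hNM ω hω a b ha
    exact hω a b (le_trans hNM ha)
  -- a.e. every ω is in some D N
  have hDU : ∀ᵐ ω ∂P, ω ∈ ⋃ N, D N := by
    filter_upwards [hconv] with ω hω
    have hcs : CauchySeq fun N => S N ω := hω.cauchySeq
    obtain ⟨N, hN⟩ := Metric.cauchySeq_iff.mp hcs (ε / 4) (by linarith)
    refine Set.mem_iUnion.mpr ⟨N, fun a b ha => ?_⟩
    rcases le_or_gt b a with hba | hab
    · rw [Finset.Ico_eq_empty (by omega), Finset.sum_empty, norm_zero]; linarith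
    · have : ∑ n ∈ Finset.Ico a b, ξ n ω • f n = S b ω - S a ω :=
        Finset.sum_Ico_eq_sub _ hab.le
      rw [this, ← dist_eq_norm]
      exact (hN b (by omega) a ha).le
  -- find N with positive probability
  have hUpos : 0 < P (⋃ N, D N) := by
    rw [pos_iff_ne_zero]
    intro h0
    have hcompl : P {ω | ω ∉ ⋃ N, D N} = 0 := ae_iff.mp hDU
    have : P (⋃ N, D N)ᶜ = 0 := hcompl
    have h1 : P (⋃ N, D N) = 1 := (prob_compl_eq_zero_iff (MeasurableSet.iUnion hDmeas)).mp this
    rw [h1] at h0; exact one_ne_zero h0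
  have : P (⋃ N, D N) = ⨆ N, P (D N) := (hDmono.directed_le).measure_iUnion
  rw [this, lt_iSup_iff] at hUpos
  obtain ⟨N₁, hN₁⟩ := hUpos
  set N := max N₁ N₀ with hNdef
  have hDNpos : 0 < P (D N) := lt_of_lt_of_le hN₁ (measure_mono (hDmono (le_max_left _ _)))
  -- head event
  set B : ℝ := ∑ n ∈ Finset.range N, ‖f n‖ with hB
  have hBnn : 0 ≤ B := Finset.sum_nonneg fun _ _ => norm_nonneg _
  set δ : ℝ := ε / 4 / (B + 1) with hδdef
  have hδ : 0 < δ := div_pos (by linarith) (by linarith)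
  set E : Set Ω := ⋂ n ∈ Finset.range N, ξ n ⁻¹' Metric.ball (c n) δ with hE
  have hEpos : 0 < P E := by
    rw [hE, hindep.meas_biInter (fun i _ => ⟨Metric.ball (c i) δ, measurableSet_ball, rfl⟩)]
    refine CanonicallyOrderedAdd.prod_pos.mpr fun i _ => ?_
    have : P (ξ i ⁻¹' Metric.ball (c i) δ) = gaussianReal 0 1 (Metric.ball (c i) δ) := by
      rw [← hlaw i, Measure.map_apply (hmeas i) measurableSet_ball]
    rw [this]
    exact gaussianReal_ball_pos _ _ hδ
  -- independence
  have hEm1 : MeasurableSet[⨆ n ∈ {k : ℕ | k < N}, MeasurableSpace.comap (ξ n) inferInstance] E := by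
    rw [hE]
    refine Finset.measurableSet_biInter _ fun n hn => ?_
    have hn' : n < N := Finset.mem_range.mp hn
    have hle : MeasurableSpace.comap (ξ n) inferInstance ≤
        ⨆ n ∈ {k : ℕ | k < N}, MeasurableSpace.comap (ξ n) inferInstance :=
      le_iSup₂ (f := fun n (_ : n ∈ {k : ℕ | k < N}) =>
        MeasurableSpace.comap (ξ n) inferInstance) n hn'
    exact hle _ ⟨Metric.ball (c n) δ, measurableSet_ball, rfl⟩
  have hindepED : P (E ∩ D N) = P E * P (D N) := by
    have hdisj : Disjoint {k : ℕ | k < N} {k : ℕ | N ≤ k} := by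
      rw [Set.disjoint_left]; intro k hk hk'
      simp only [Set.mem_setOf_eq] at hk hk'; omega
    have hI := indep_iSup_of_disjoint (fun i => (hmeas i).comap_le) hindep.iIndep hdisj
    exact (Indep_iff _ _ _).mp hI E (D N) hEm1 (hDm2 N)
  have hpos : 0 < P (E ∩ D N) := by
    rw [hindepED]; exact ENNReal.mul_pos hEpos.ne' hDNpos.ne'
  refine lt_of_lt_of_le hpos (measure_mono_ae ?_)
  -- inclusion a.e.
  have hyN : y = ∑ n ∈ Finset.range N, c n • f n := by
    rw [← hc]
    exact Finsupp.sum_of_support_subset c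
      (hN₀.trans (Finset.range_subset_range.mpr (le_max_right _ _))) _ (fun i _ => zero_smul ℝ (f i))
  filter_upwards [hconv] with ω hω hmem
  obtain ⟨hmemE, hmemD⟩ := hmem
  -- tail bound
  have htail : ‖X ω - S N ω‖ ≤ ε / 4 := by
    have h1 : Tendsto (fun M => S M ω - S N ω) atTop (𝓝 (X ω - S N ω)) :=
      hω.sub_const _
    refine le_of_tendsto h1.norm ?_
    filter_upwards [eventually_ge_atTop N] with M hM
    have : S M ω - S N ω = ∑ n ∈ Finset.Ico N M, ξ n ω • f n :=
      (Finset.sum_Ico_eq_sub _ hM).symm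
    rw [this]
    exact hmemD N M le_rfl
  -- head bound
  have hhead : ‖S N ω - y‖ ≤ δ * B := by
    rw [hyN, hS, ← Finset.sum_sub_distrib]
    simp_rw [← sub_smul]
    refine le_trans (norm_sum_le _ _) ?_
    rw [hB, Finset.mul_sum]
    refine Finset.sum_le_sum fun n hn => ?_
    rw [norm_smul]
    have hball : ξ n ω ∈ Metric.ball (c n) δ := by
      have := Set.mem_iInter₂.mp hmemE n hn
      exact this
    rw [Metric.mem_ball, Real.dist_eq] at hball
    have : ‖ξ n ω - c n‖ ≤ δ := by rw [Real.norm_eq_abs]; exact hball.le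
    exact mul_le_mul_of_nonneg_right this (norm_nonneg _) |>.trans
      (mul_le_mul_of_nonneg_right le_rfl (norm_nonneg _))
  have hδB : δ * B ≤ ε / 4 := by
    rw [hδdef]
    rw [div_mul_eq_mul_div, div_le_iff₀ (by linarith)]
    have : ε / 4 * B ≤ ε / 4 * (B + 1) := by nlinarith
    linarith
  calc ‖X ω - y‖ ≤ ‖X ω - S N ω‖ + ‖S N ω - y‖ := by
        have : X ω - y = (X ω - S N ω) + (S N ω - y) := by abel
        rw [this]; exact norm_add_le _ _
    _ ≤ ε / 4 + ε / 4 := add_le_add htail (hhead.trans hδB)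
    _ < ε := by linarith

/-- If the partial sums `∑_{n < N} ξ n • f n` of a random series with
independent standard Gaussian coefficients `ξ n` converge almost surely in a separable
real Banach space `F` to a random element `X`, then the topological support of the law
of `X` is the closed linear span of the vectors `f n`. -/
theorem stmt_5 {F : Type*} [NormedAddCommGroup F] [NormedSpace ℝ F]
    [CompleteSpace F] [TopologicalSpace.SeparableSpace F]
    [MeasurableSpace F] [BorelSpace F]
    {Ω : Type*} [MeasurableSpace Ω] (P : Measure Ω) [IsProbabilityMeasure P]
    (f : ℕ → F) (ξ : ℕ → Ω → ℝ)
    (hmeas : ∀ n, Measurable (ξ n))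
    (hlaw : ∀ n, Measure.map (ξ n) P = gaussianReal 0 1)
    (hindep : iIndepFun ξ P)
    (X : Ω → F) (hX : Measurable X)
    (hconv : ∀ᵐ ω ∂P,
      Tendsto (fun N => ∑ n ∈ Finset.range N, ξ n ω • f n) atTop (𝓝 (X ω))) :
    {x : F | ∀ U : Set F, IsOpen U → x ∈ U → 0 < P (X ⁻¹' U)} =
      closure (Submodule.span ℝ (Set.range f) : Set F) := by
  haveI : SecondCountableTopology F := UniformSpace.secondCountable_of_separable F
  have hXmem : ∀ᵐ ω ∂P, X ω ∈ closure (Submodule.span ℝ (Set.range f) : Set F) := by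
    filter_upwards [hconv] with ω hω
    refine mem_closure_of_tendsto hω (Filter.Eventually.of_forall fun N => ?_)
    exact SetLike.mem_coe.mpr <| Submodule.sum_mem _ fun n _ =>
      Submodule.smul_mem _ _ (Submodule.subset_span (Set.mem_range_self n))
  ext x
  simp only [Set.mem_setOf_eq]
  constructor
  · intro h
    by_contra hx
    have hU : IsOpen ((closure (Submodule.span ℝ (Set.range f) : Set F))ᶜ) :=
      isClosed_closure.isOpen_compl
    have hpos := h _ hU hx
    have hzero : P (X ⁻¹' (closure (Submodule.span ℝ (Set.range f) : Set F))ᶜ) = 0 := by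
      refine measure_mono_null (fun ω hω => ?_) (ae_iff.mp hXmem)
      exact hω
    rw [hzero] at hpos
    exact lt_irrefl 0 hpos
  · intro hx U hUopen hxU
    obtain ⟨ε, hε, hball⟩ := Metric.isOpen_iff.mp hUopen x hxU
    obtain ⟨y, hyspan, hdist⟩ := Metric.mem_closure_iff.mp hx (ε / 2) (by linarith)
    have hkey := key_ball_pos P f ξ hmeas hlaw hindep X hconv y hyspan
      (ε := ε / 2) (by linarith)
    refine lt_of_lt_of_le hkey (measure_mono fun ω hω => ?_)
    simp only [Set.mem_setOf_eq] at hω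
    apply hball
    rw [Metric.mem_ball, dist_eq_norm]
    have : X ω - x = (X ω - y) + (y - x) := by abel
    rw [this]
    calc ‖(X ω - y) + (y - x)‖ ≤ ‖X ω - y‖ + ‖y - x‖ := norm_add_le _ _
      _ < ε / 2 + ε / 2 := by
          refine add_lt_add hω ?_
          rw [← dist_eq_norm, dist_comm]; exact hdist
      _ = ε := by ring
end

section
/- Let M be a σ-compact, locally compact metric space, N a metric space, and W ⊆ N a closed subset. Let μ be a Borel probability measure on C(M, N) (with the compact-open topology) such that for μ-almost every f ∈ C(M, N) the set f⁻¹(W) is a closed discrete subset of M. Then for every Borel set A ⊆ M the counting function f ↦ #(f⁻¹(W) ∩ A) ∈ ℕ ∪ {∞} is measurable with respect to the μ-completion of the Borel σ-algebra of C(M, N), and the set function A ↦ ∫ #(f⁻¹(W) ∩ A) dμ(f) is a Borel measure on M. -/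
open MeasureTheory Topology Metric Set

section helpers
variable {M N : Type*} [MetricSpace M] [MetricSpace N]
  [MeasurableSpace C(M, N)] [BorelSpace C(M, N)]

lemma meas_event (W : Set N) (hW : IsClosed W) {K : Set M} (hK : IsCompact K) :
    MeasurableSet {f : C(M, N) | ∃ x ∈ K, f x ∈ W} := by
  rcases W.eq_empty_or_nonempty with rfl | hWne
  · simp
  obtain ⟨t, htK, htc, hKt⟩ := EMetric.subset_countable_closure_of_compact hK
  have hopen : ∀ (x : M) (m : ℕ),
      IsOpen {f : C(M, N) | infDist (f x) W < 1 / (m + 1)} :=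
    fun x m => isOpen_lt ((continuous_infDist_pt W).comp (continuous_eval_const x))
      continuous_const
  have : {f : C(M, N) | ∃ x ∈ K, f x ∈ W}
      = ⋂ m : ℕ, ⋃ x ∈ t, {f : C(M, N) | infDist (f x) W < 1 / (m + 1)} := by
    ext f
    have hfc : Continuous fun x : M => infDist (f x) W :=
      (continuous_infDist_pt W).comp (map_continuous f)
    simp only [mem_setOf_eq, mem_iInter, mem_iUnion]
    constructor
    · rintro ⟨x₀, hx₀K, hx₀W⟩ m
      have h0 : infDist (f x₀) W < 1 / (m + 1) := by
        rw [(hW.mem_iff_infDist_zero hWne).1 hx₀W]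
        positivity
      have hx₀t : x₀ ∈ closure t := hKt hx₀K
      have hmem : {x : M | infDist (f x) W < 1 / (m + 1)} ∈ nhds x₀ :=
        (isOpen_lt hfc continuous_const).mem_nhds h0
      obtain ⟨x, hxU, hxt⟩ := mem_closure_iff_nhds.1 hx₀t _ hmem
      exact ⟨x, hxt, hxU⟩
    · intro h
      set C : ℕ → Set M := fun m => K ∩ {x : M | infDist (f x) W ≤ 1 / (m + 1)} with hC
      have hCclosed : ∀ m, IsClosed (C m) :=
        fun m => hK.isClosed.inter (isClosed_le hfc continuous_const)
      have hCne : ∀ m, (C m).Nonempty := by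
        intro m
        obtain ⟨x, hxt, hx⟩ := h m
        exact ⟨x, htK hxt, hx.le⟩
      have hsub : ∀ m, C (m + 1) ⊆ C m := by
        intro m x hx
        refine ⟨hx.1, ?_⟩
        have hx2 : infDist (f x) W ≤ 1 / ((m:ℝ) + 1 + 1) := by
          have := hx.2
          simp only [mem_setOf_eq] at this
          push_cast at this
          linarith
        have h2 : (1:ℝ) / ((m:ℝ) + 1 + 1) ≤ 1 / ((m:ℝ) + 1) :=
          one_div_le_one_div_of_le (by positivity) (by linarith)
        exact le_trans hx2 h2
      obtain ⟨x₀, hx₀⟩ := IsCompact.nonempty_iInter_of_sequence_nonempty_isCompact_isClosed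
        C hsub hCne (hK.of_isClosed_subset (hCclosed 0) inter_subset_left) hCclosed
      simp only [mem_iInter, hC, mem_inter_iff, mem_setOf_eq] at hx₀
      refine ⟨x₀, (hx₀ 0).1, ?_⟩
      have h0 : infDist (f x₀) W = 0 := by
        have hle : ∀ m : ℕ, infDist (f x₀) W ≤ 1 / (m + 1) := fun m => (hx₀ m).2
        have : infDist (f x₀) W ≤ 0 := by
          by_contra hpos
          push_neg at hpos
          obtain ⟨m, hm⟩ := exists_nat_one_div_lt hpos
          exact absurd (hle m) (by push_neg; exact_mod_cast hm)
        exact le_antisymm this (infDist_nonneg)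
      exact (hW.mem_iff_infDist_zero hWne).2 h0
  rw [this]
  exact MeasurableSet.iInter fun m =>
    MeasurableSet.biUnion htc fun x _ => (hopen x m).measurableSet

lemma meas_count_ge [SigmaCompactSpace M] [LocallyCompactSpace M]
    (W : Set N) (hW : IsClosed W) {V : Set M} (hV : IsOpen V) (k : ℕ) :
    MeasurableSet {f : C(M, N) | (k : ℕ∞) ≤ ((⇑f) ⁻¹' W ∩ V).encard} := by
  obtain ⟨D, hDc, hDd⟩ := TopologicalSpace.exists_countable_dense M
  -- admissible tuples of (center, radius) pairs
  set T : Set (Fin k → M × ℚ) := {c | (∀ i, (c i).1 ∈ D ∧ 0 < (c i).2 ∧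
      IsCompact (closedBall (c i).1 ((c i).2 : ℝ)) ∧ closedBall (c i).1 ((c i).2 : ℝ) ⊆ V) ∧
      ∀ i j, i ≠ j → Disjoint (closedBall (c i).1 ((c i).2 : ℝ))
        (closedBall (c j).1 ((c j).2 : ℝ))} with hT
  have hTc : T.Countable := by
    have : T ⊆ {c : Fin k → M × ℚ | ∀ i, c i ∈ D ×ˢ (univ : Set ℚ)} := by
      intro c hc i
      exact ⟨(hc.1 i).1, trivial⟩
    exact (Set.countable_pi fun i => hDc.prod countable_univ).mono this
  have key : {f : C(M, N) | (k : ℕ∞) ≤ ((⇑f) ⁻¹' W ∩ V).encard}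
      = ⋃ c ∈ T, ⋂ i : Fin k, {f : C(M, N) | ∃ x ∈ closedBall (c i).1 ((c i).2 : ℝ), f x ∈ W} := by
    ext f
    simp only [mem_setOf_eq, mem_iUnion, mem_iInter]
    constructor
    · intro hk
      obtain ⟨t, hts, htk⟩ := Set.exists_subset_encard_eq hk
      have htfin : t.Finite := Set.finite_of_encard_eq_coe htk
      have hcard : htfin.toFinset.card = k := by
        have := htfin.encard_eq_coe_toFinset_card
        rw [htk] at this
        exact_mod_cast this.symm
      set e := Finset.equivFinOfCardEq hcard with he
      set y : Fin k → M := fun i => ((e.symm i : htfin.toFinset) : M) with hy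
      have hyinj : Function.Injective y := by
        intro i j hij
        have : (e.symm i : htfin.toFinset) = (e.symm j : htfin.toFinset) := Subtype.ext hij
        simpa using e.symm.injective this
      have hyt : ∀ i, y i ∈ t := fun i => htfin.mem_toFinset.1 (e.symm i).2
      have hyW : ∀ i, f (y i) ∈ W := fun i => (hts (hyt i)).1
      have hyV : ∀ i, y i ∈ V := fun i => (hts (hyt i)).2
      -- a uniform separation constant
      obtain ⟨ε, hε0, hεd⟩ : ∃ ε > 0, ∀ i j : Fin k, i ≠ j → 3 * ε ≤ dist (y i) (y j) := by
        set F : Finset (Fin k × Fin k) :=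
          Finset.univ.filter (fun p : Fin k × Fin k => p.1 ≠ p.2) with hF
        by_cases hFne : F.Nonempty
        · refine ⟨F.inf' hFne (fun p => dist (y p.1) (y p.2)) / 3, ?_, ?_⟩
          · have : ∀ p ∈ F, 0 < dist (y p.1) (y p.2) := by
              intro p hp
              have hne : p.1 ≠ p.2 := by simpa [hF] using hp
              exact dist_pos.2 fun h => hne (hyinj h)
            have := (Finset.lt_inf'_iff hFne (a := (0:ℝ))).2 this
            linarith
          · intro i j hij
            have hmem : (i, j) ∈ F := by simp [hF, hij]
            have := Finset.inf'_le (fun p => dist (y p.1) (y p.2)) hmem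
            linarith
        · refine ⟨1, one_pos, fun i j hij => absurd ?_ hFne⟩
          exact ⟨(i, j), by simp [hF, hij]⟩
      -- choose radii
      have hradii : ∀ i : Fin k, ∃ r : ℝ, 0 < r ∧ IsCompact (closedBall (y i) r) ∧
          closedBall (y i) r ⊆ V ∧ r ≤ ε := by
        intro i
        obtain ⟨s, hs0, hsc⟩ := exists_isCompact_closedBall (y i)
        obtain ⟨u, hu0, huV⟩ := Metric.isOpen_iff.1 hV (y i) (hyV i)
        refine ⟨min s (min (u / 2) ε), by positivity, ?_, ?_, ?_⟩
        · exact hsc.of_isClosed_subset Metric.isClosed_closedBall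
            (closedBall_subset_closedBall (min_le_left _ _))
        · refine subset_trans (closedBall_subset_ball ?_) huV
          calc min s (min (u / 2) ε) ≤ u / 2 := le_trans (min_le_right _ _) (min_le_left _ _)
            _ < u := by linarith
        · exact le_trans (min_le_right _ _) (min_le_right _ _)
      choose r hr0 hrc hrV hrε using hradii
      -- choose rational centers and radii
      have hcenters : ∀ i : Fin k, ∃ x ∈ D, ∃ q : ℚ, dist x (y i) < (q : ℝ) ∧
          (q : ℝ) < r i / 2 ∧ 0 < q := by
        intro i
        obtain ⟨x, hxD, hx⟩ := Metric.mem_closure_iff.1 (hDd.closure_eq ▸ mem_univ (y i) :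
          y i ∈ closure D) (r i / 4) (by linarith [hr0 i])
        obtain ⟨q, hq1, hq2⟩ := exists_rat_btwn (show r i / 4 < r i / 2 by linarith [hr0 i])
        refine ⟨x, hxD, q, ?_, hq2, ?_⟩
        · rw [dist_comm]; linarith
        · have h0 : (0:ℝ) < (q:ℝ) := lt_trans (by linarith [hr0 i]) hq1
          exact_mod_cast h0
      choose x hxD q hq1 hq2 hq3 using hcenters
      set c : Fin k → M × ℚ := fun i => (x i, q i) with hc
      have hsub : ∀ i, closedBall (x i) ((q i : ℝ)) ⊆ closedBall (y i) (r i) := by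
        intro i z hz
        have : dist z (y i) ≤ dist z (x i) + dist (x i) (y i) := dist_triangle _ _ _
        have h1 : dist z (x i) ≤ (q i : ℝ) := hz
        have h2 : dist (x i) (y i) < (q i : ℝ) := hq1 i
        have : dist z (y i) ≤ r i := by
          have := hq2 i
          linarith
        exact this
      refine ⟨c, ⟨fun i => ⟨hxD i, hq3 i, ?_, subset_trans (hsub i) (hrV i)⟩, ?_⟩, fun i => ?_⟩
      · exact (hrc i).of_isClosed_subset Metric.isClosed_closedBall (hsub i)
      · intro i j hij
        rw [Set.disjoint_left]
        intro z hzi hzj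
        have h1 : dist z (y i) ≤ r i := hsub i hzi
        have h2 : dist z (y j) ≤ r j := hsub j hzj
        have h3 := hεd i j hij
        have : dist (y i) (y j) ≤ dist (y i) z + dist z (y j) := dist_triangle _ _ _
        rw [dist_comm (y i) z] at this
        have := hrε i; have := hrε j
        linarith
      · refine ⟨y i, ?_, hyW i⟩
        simp only [hc, mem_closedBall]
        rw [dist_comm]
        exact (hq1 i).le
    · rintro ⟨c, ⟨hc1, hc2⟩, hf⟩
      choose z hz1 hz2 using hf
      have hzinj : Function.Injective z := by
        intro i j hij
        by_contra hne
        exact (Set.disjoint_left.1 (hc2 i j hne) (hz1 i)) (hij ▸ hz1 j)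
      have hzmem : ∀ i, z i ∈ (⇑f) ⁻¹' W ∩ V :=
        fun i => ⟨hz2 i, (hc1 i).2.2.2 (hz1 i)⟩
      calc (k : ℕ∞) = (Set.range z).encard := by
            rw [← Set.image_univ, Set.InjOn.encard_image (hzinj.injOn)]
            simp [Set.encard_univ]
        _ ≤ _ := Set.encard_mono (Set.range_subset_iff.2 hzmem)
  rw [key]
  exact MeasurableSet.biUnion hTc fun c hc =>
    MeasurableSet.iInter fun i => meas_event W hW (hc.1 i).2.2.1

lemma enat_cast_eq_tsum (n : ℕ∞) :
    (n : ENNReal) = ∑' k : ℕ, if ((k : ℕ∞) + 1 ≤ n) then (1 : ENNReal) else 0 := by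
  cases n with
  | top =>
    rw [ENat.toENNReal_top]
    have : ∀ k : ℕ, (if ((k : ℕ∞) + 1 ≤ (⊤ : ℕ∞)) then (1 : ENNReal) else 0) = 1 := by
      intro k; simp
    rw [tsum_congr fun k => this k]
    exact (ENNReal.tsum_const_eq_top_of_ne_zero (α := ℕ) one_ne_zero).symm
  | coe m =>
    rw [ENat.toENNReal_coe]
    refine Eq.symm ?_
    have hcond : ∀ k : ℕ, ((k : ℕ∞) + 1 ≤ (m : ℕ∞)) ↔ k < m := by
      intro k
      rw [show ((k : ℕ∞) + 1) = ((k + 1 : ℕ) : ℕ∞) by push_cast; ring, Nat.cast_le]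
      omega
    calc (∑' k : ℕ, if ((k : ℕ∞) + 1 ≤ (m : ℕ∞)) then (1 : ENNReal) else 0)
        = ∑' k : ℕ, if k < m then (1 : ENNReal) else 0 := by
          exact tsum_congr fun k => by rw [if_congr (hcond k) rfl rfl]
      _ = ∑ k ∈ Finset.range m, if k < m then (1 : ENNReal) else 0 := by
          refine tsum_eq_sum ?_
          intro k hk
          simp only [Finset.mem_range] at hk
          simp [hk]
      _ = ∑ k ∈ Finset.range m, (1 : ENNReal) := by
          refine Finset.sum_congr rfl fun k hk => ?_
          simp only [Finset.mem_range] at hk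
          simp [hk]
      _ = m := by simp

lemma meas_count_open [SigmaCompactSpace M] [LocallyCompactSpace M]
    (W : Set N) (hW : IsClosed W) {V : Set M} (hV : IsOpen V) :
    Measurable fun f : C(M, N) => (((⇑f) ⁻¹' W ∩ V).encard : ENNReal) := by
  have : (fun f : C(M, N) => (((⇑f) ⁻¹' W ∩ V).encard : ENNReal))
      = fun f : C(M, N) => ∑' k : ℕ, if (((k + 1 : ℕ) : ℕ∞) ≤ ((⇑f) ⁻¹' W ∩ V).encard)
          then (1 : ENNReal) else 0 := by
    funext f
    rw [enat_cast_eq_tsum]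
    refine tsum_congr fun k => ?_
    norm_cast
  rw [this]
  refine Measurable.ennreal_tsum fun k => ?_
  have := (meas_count_ge W hW hV (k + 1))
  exact Measurable.ite this measurable_const measurable_const

variable [MeasurableSpace M] [BorelSpace M]

lemma count_eq_encard {s : Set M} (hs : MeasurableSet s) :
    Measure.count s = (s.encard : ENNReal) := by
  rw [Measure.count_apply hs]

lemma meas_indicator [SigmaCompactSpace M] [LocallyCompactSpace M]
    (W : Set N) (hW : IsClosed W) (P : Set C(M, N)) (hPm : MeasurableSet P)
    (hP : ∀ f ∈ P, DiscreteTopology ((⇑f) ⁻¹' W)) {A : Set M} (hA : MeasurableSet A) :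
    Measurable (P.indicator fun f : C(M, N) => (((⇑f) ⁻¹' W ∩ A).encard : ENNReal)) := by
  classical
  set K := CompactExhaustion.choice M with hK
  set U : ℕ → Set M := fun n => interior (K (n + 1)) with hU
  have hUopen : ∀ n, IsOpen (U n) := fun n => isOpen_interior
  have hUmono : Monotone U := by
    apply monotone_nat_of_le_succ
    intro n
    exact subset_trans interior_subset (K.subset_interior_succ (n + 1))
  have hUuniv : ⋃ n, U n = univ := by
    apply eq_univ_of_forall
    intro x
    obtain ⟨n, hn⟩ := mem_iUnion.1 (K.iUnion_eq ▸ mem_univ x : x ∈ ⋃ n, K n)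
    exact mem_iUnion.2 ⟨n, K.subset_interior_succ n hn⟩
  have hUcpt : ∀ n, IsCompact (closure (U n)) := fun n =>
    (K.isCompact (n + 1)).of_isClosed_subset isClosed_closure
      (closure_minimal interior_subset (K.isCompact (n + 1)).isClosed)
  have hSmeas : ∀ f : C(M, N), MeasurableSet ((⇑f) ⁻¹' W) := fun f =>
    (hW.preimage (map_continuous f)).measurableSet
  -- finiteness of counts in U n for good f
  have hfin : ∀ f ∈ P, ∀ (n : ℕ) (B : Set M), ((⇑f) ⁻¹' W ∩ B ∩ U n).Finite := by
    intro f hf n B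
    have h1 : (⇑f) ⁻¹' W ∩ closure (U n) |>.Finite := by
      refine IsCompact.finite ?_ ?_
      · exact (hUcpt n).inter_left (hW.preimage (map_continuous f))
      · exact ⟨DiscreteTopology.of_subset (hP f hf) inter_subset_left⟩
    exact h1.subset (by intro x hx; exact ⟨hx.1.1, subset_closure hx.2⟩)
  -- the truncated counting functions
  set G : ℕ → Set M → C(M, N) → ENNReal := fun n B =>
    P.indicator fun f => (((⇑f) ⁻¹' W ∩ B ∩ U n).encard : ENNReal) with hG
  have hGopen : ∀ (n : ℕ) {V : Set M}, IsOpen V → Measurable (G n V) := by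
    intro n V hV
    have : (fun f : C(M, N) => (((⇑f) ⁻¹' W ∩ V ∩ U n).encard : ENNReal))
        = fun f : C(M, N) => (((⇑f) ⁻¹' W ∩ (V ∩ U n)).encard : ENNReal) := by
      funext f; rw [inter_assoc]
    refine Measurable.indicator ?_ hPm
    rw [this]
    exact meas_count_open W hW (hV.inter (hUopen n))
  have hGmeas : ∀ n : ℕ, ∀ ⦃B : Set M⦄, MeasurableSet B → Measurable (G n B) := by
    intro n
    refine MeasurableSpace.induction_on_inter (C := fun B _ => Measurable (G n B))
      BorelSpace.measurable_eq isPiSystem_isOpen ?_ ?_ ?_ ?_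
    · -- empty
      show Measurable (G n ∅)
      have : G n ∅ = fun _ => 0 := by
        funext f
        simp [hG, Set.indicator_apply]
      rw [this]; exact measurable_const
    · intro V hV; exact hGopen n hV
    · -- complement
      intro B hB hmeas
      show Measurable (G n Bᶜ)
      change Measurable (G n B) at hmeas
      have hpt : G n Bᶜ = fun f => G n univ f - G n B f := by
        funext f
        by_cases hf : f ∈ P
        · simp only [hG, Set.indicator_of_mem hf]
          have hBsub : (⇑f) ⁻¹' W ∩ B ∩ U n ⊆ (⇑f) ⁻¹' W ∩ univ ∩ U n := by
            intro x hx; exact ⟨⟨hx.1.1, trivial⟩, hx.2⟩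
          have hdiff : (⇑f) ⁻¹' W ∩ Bᶜ ∩ U n
              = ((⇑f) ⁻¹' W ∩ univ ∩ U n) \ ((⇑f) ⁻¹' W ∩ B ∩ U n) := by
            ext x
            simp only [mem_inter_iff, mem_diff, mem_compl_iff, mem_univ, and_true]
            tauto
          have m1 : MeasurableSet ((⇑f) ⁻¹' W ∩ B ∩ U n) :=
            ((hSmeas f).inter hB).inter (hUopen n).measurableSet
          have m2 : MeasurableSet ((⇑f) ⁻¹' W ∩ univ ∩ U n) :=
            ((hSmeas f).inter MeasurableSet.univ).inter (hUopen n).measurableSet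
          have mB : MeasurableSet ((⇑f) ⁻¹' W ∩ Bᶜ ∩ U n) :=
            ((hSmeas f).inter hB.compl).inter (hUopen n).measurableSet
          rw [← count_eq_encard m1, ← count_eq_encard m2, ← count_eq_encard mB, hdiff]
          refine measure_diff hBsub m1.nullMeasurableSet ?_
          exact ((Measure.count_apply_lt_top' m1).2 (hfin f hf n B)).ne
        · simp [hG, Set.indicator_of_notMem hf]
      rw [hpt]
      exact (hGopen n isOpen_univ).sub hmeas
    · -- disjoint unions
      intro g hgdisj hgmeas hgC
      show Measurable (G n (⋃ i, g i))
      replace hgC : ∀ i, Measurable (G n (g i)) := hgC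
      have hpt : G n (⋃ i, g i) = fun f => ∑' i, G n (g i) f := by
        funext f
        by_cases hf : f ∈ P
        · simp only [hG, Set.indicator_of_mem hf]
          have heq : (⇑f) ⁻¹' W ∩ (⋃ i, g i) ∩ U n = ⋃ i, ((⇑f) ⁻¹' W ∩ g i ∩ U n) := by
            rw [inter_iUnion, iUnion_inter]
          have hm : ∀ i, MeasurableSet ((⇑f) ⁻¹' W ∩ g i ∩ U n) := fun i =>
            ((hSmeas f).inter (hgmeas i)).inter (hUopen n).measurableSet
          have hd : Pairwise (Function.onFun Disjoint fun i => (⇑f) ⁻¹' W ∩ g i ∩ U n) := by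
            intro i j hij
            refine Set.disjoint_left.2 fun x hx hx' => ?_
            exact Set.disjoint_left.1 (hgdisj hij) hx.1.2 hx'.1.2
          rw [← count_eq_encard (heq ▸ MeasurableSet.iUnion hm), heq,
            measure_iUnion hd hm]
          exact tsum_congr fun i => count_eq_encard (hm i)
        · simp [hG, Set.indicator_of_notMem hf]
      rw [hpt]
      exact Measurable.ennreal_tsum fun i => hgC i
  -- pass to the limit
  have hlim : (P.indicator fun f : C(M, N) => (((⇑f) ⁻¹' W ∩ A).encard : ENNReal))
      = fun f => ⨆ n, G n A f := by
    funext f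
    by_cases hf : f ∈ P
    · simp only [hG, Set.indicator_of_mem hf]
      have heq : (⇑f) ⁻¹' W ∩ A = ⋃ n, ((⇑f) ⁻¹' W ∩ A ∩ U n) := by
        rw [← inter_iUnion, hUuniv, inter_univ]
      have hm : ∀ n, MeasurableSet ((⇑f) ⁻¹' W ∩ A ∩ U n) := fun n =>
        ((hSmeas f).inter hA).inter (hUopen n).measurableSet
      have hdir : Directed (· ⊆ ·) fun n => (⇑f) ⁻¹' W ∩ A ∩ U n := by
        refine Monotone.directed_le fun m n hmn => ?_
        exact inter_subset_inter subset_rfl (hUmono hmn)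
      calc (((⇑f) ⁻¹' W ∩ A).encard : ENNReal)
          = Measure.count ((⇑f) ⁻¹' W ∩ A) := (count_eq_encard ((hSmeas f).inter hA)).symm
        _ = Measure.count (⋃ n, (⇑f) ⁻¹' W ∩ A ∩ U n) := by rw [← heq]
        _ = ⨆ n, Measure.count ((⇑f) ⁻¹' W ∩ A ∩ U n) := hdir.measure_iUnion
        _ = ⨆ n, (((⇑f) ⁻¹' W ∩ A ∩ U n).encard : ENNReal) := by
            exact iSup_congr fun n => count_eq_encard (hm n)
    · simp [hG, Set.indicator_of_notMem hf]
  rw [hlim]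
  exact Measurable.iSup fun n => hGmeas n hA

end helpers

/-- Let `M` be a σ-compact locally compact metric space, `N` a metric
space, `W ⊆ N` closed, and let `μ` be a Borel probability measure on `C(M, N)`
(compact-open topology) such that almost every `f` has `(⇑f) ⁻¹' W` closed and discrete.
Then for every Borel `A ⊆ M` the counting function `f ↦ #((⇑f) ⁻¹' W ∩ A)` (with values in
`ℕ ∪ {∞} ⊆ ℝ≥0∞`) is measurable for the `μ`-completion of the Borel σ-algebra, and
`A ↦ ∫ #((⇑f) ⁻¹' W ∩ A) dμ(f)` extends to a Borel measure on `M`. -/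
theorem stmt_7 {M N : Type*} [MetricSpace M] [SigmaCompactSpace M] [LocallyCompactSpace M]
    [MeasurableSpace M] [BorelSpace M] [MetricSpace N]
    [MeasurableSpace C(M, N)] [BorelSpace C(M, N)]
    (W : Set N) (hW : IsClosed W)
    (μ : Measure C(M, N)) [IsProbabilityMeasure μ]
    (hdisc : ∀ᵐ (f : C(M, N)) ∂μ, IsClosed ((⇑f) ⁻¹' W) ∧ DiscreteTopology ((⇑f) ⁻¹' W)) :
    (∀ A : Set M, MeasurableSet A →
      NullMeasurable (fun f : C(M, N) => (((⇑f) ⁻¹' W ∩ A).encard : ENNReal)) μ) ∧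
    ∃ ν : Measure M, ∀ A : Set M, MeasurableSet A →
      ν A = ∫⁻ f, (((⇑f) ⁻¹' W ∩ A).encard : ENNReal) ∂μ := by
  classical
  -- extract a measurable full-measure set of good functions
  have hnull : μ {f : C(M, N) | ¬ (IsClosed ((⇑f) ⁻¹' W) ∧ DiscreteTopology ((⇑f) ⁻¹' W))} = 0 :=
    ae_iff.1 hdisc
  set Bad := {f : C(M, N) | ¬ (IsClosed ((⇑f) ⁻¹' W) ∧ DiscreteTopology ((⇑f) ⁻¹' W))} with hBad
  set P : Set C(M, N) := (toMeasurable μ Bad)ᶜ with hPdef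
  have hPm : MeasurableSet P := (measurableSet_toMeasurable μ Bad).compl
  have hPc : μ Pᶜ = 0 := by
    rw [hPdef, compl_compl, measure_toMeasurable]; exact hnull
  have hPgood : ∀ f ∈ P, DiscreteTopology ((⇑f) ⁻¹' W) := by
    intro f hf
    by_contra h
    exact hf (subset_toMeasurable μ Bad (by simp [hBad, h]))
  have hae : ∀ (A : Set M),
      (P.indicator fun f : C(M, N) => (((⇑f) ⁻¹' W ∩ A).encard : ENNReal))
        =ᵐ[μ] fun f : C(M, N) => (((⇑f) ⁻¹' W ∩ A).encard : ENNReal) := by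
    intro A
    exact Filter.eventuallyEq_of_mem (mem_ae_iff.2 hPc) fun f hf => Set.indicator_of_mem hf _
  have hmain : ∀ A : Set M, MeasurableSet A →
      Measurable (P.indicator fun f : C(M, N) => (((⇑f) ⁻¹' W ∩ A).encard : ENNReal)) :=
    fun A hA => meas_indicator W hW P hPm hPgood hA
  have haemeas : ∀ A : Set M, MeasurableSet A →
      AEMeasurable (fun f : C(M, N) => (((⇑f) ⁻¹' W ∩ A).encard : ENNReal)) μ :=
    fun A hA => ⟨_, hmain A hA, (hae A).symm⟩
  constructor
  · exact fun A hA => ((hmain A hA).nullMeasurable).congr (hae A)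
  · -- the measure
    have hSmeas : ∀ f : C(M, N), MeasurableSet ((⇑f) ⁻¹' W) := fun f =>
      (hW.preimage (map_continuous f)).measurableSet
    refine ⟨Measure.ofMeasurable
      (fun A _ => ∫⁻ f, (((⇑f) ⁻¹' W ∩ A).encard : ENNReal) ∂μ) ?_ ?_, ?_⟩
    · simp
    · intro g hgmeas hgdisj
      have hpt : ∀ f : C(M, N), (((⇑f) ⁻¹' W ∩ ⋃ i, g i).encard : ENNReal)
          = ∑' i, (((⇑f) ⁻¹' W ∩ g i).encard : ENNReal) := by
        intro f
        have heq : (⇑f) ⁻¹' W ∩ (⋃ i, g i) = ⋃ i, ((⇑f) ⁻¹' W ∩ g i) := inter_iUnion _ _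
        have hm : ∀ i, MeasurableSet ((⇑f) ⁻¹' W ∩ g i) := fun i =>
          (hSmeas f).inter (hgmeas i)
        have hd : Pairwise (Function.onFun Disjoint fun i => (⇑f) ⁻¹' W ∩ g i) := by
          intro i j hij
          refine Set.disjoint_left.2 fun x hx hx' => ?_
          exact Set.disjoint_left.1 (hgdisj hij) hx.2 hx'.2
        rw [← count_eq_encard (heq ▸ MeasurableSet.iUnion hm), heq, measure_iUnion hd hm]
        exact tsum_congr fun i => count_eq_encard (hm i)
      calc ∫⁻ f, (((⇑f) ⁻¹' W ∩ ⋃ i, g i).encard : ENNReal) ∂μ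
          = ∫⁻ f, ∑' i, (((⇑f) ⁻¹' W ∩ g i).encard : ENNReal) ∂μ := by
            exact lintegral_congr hpt
        _ = ∑' i, ∫⁻ f, (((⇑f) ⁻¹' W ∩ g i).encard : ENNReal) ∂μ :=
            lintegral_tsum fun i => haemeas (g i) (hgmeas i)
    · intro A hA
      exact Measure.ofMeasurable_apply A hA
end

section
/- Let M, N and T be metrizable topological spaces, let K ⊆ N be a closed subset, let φ : K → T be a continuous map, and let A ⊆ M be a compact subset. Then the function from C(M, N) × T to ℕ ∪ {∞} given by (f, t) ↦ #(f⁻¹(φ⁻¹(t)) ∩ A) is Borel measurable, where C(M, N) carries the compact-open topology. Moreover, for each ε > 0, the function (f, t) ↦ #_ε(f⁻¹(φ⁻¹(t)) ∩ A), where #_ε(S) is the minimum number of open sets of diameter less than ε needed to cover S (for a fixed metric on M), is upper semicontinuous. -/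
open Topology Metric

/-- `covNumber ε S` is the minimum number of open sets of diameter less than `ε` needed
to cover `S` (`∞ ∈ ℝ≥0∞` if no finite cover exists). -/
noncomputable def covNumber {M : Type*} [MetricSpace M] (ε : ℝ) (S : Set M) : ENNReal :=
  sInf ((fun 𝒰 : Finset (Set M) => (𝒰.card : ENNReal)) ''
    {𝒰 : Finset (Set M) | (∀ U ∈ 𝒰, IsOpen U ∧ Metric.diam U < ε) ∧ S ⊆ ⋃ U ∈ 𝒰, U})

/-- Generalized covering number: minimum number of open sets satisfying a predicate `P`
needed to cover `S`. -/
noncomputable def genCov {M : Type*} [MetricSpace M] (P : Set M → Prop) (S : Set M) : ENNReal :=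
  sInf ((fun 𝒰 : Finset (Set M) => (𝒰.card : ENNReal)) ''
    {𝒰 : Finset (Set M) | (∀ U ∈ 𝒰, IsOpen U ∧ P U) ∧ S ⊆ ⋃ U ∈ 𝒰, U})

lemma covNumber_eq_genCov {M : Type*} [MetricSpace M] (ε : ℝ) (S : Set M) :
    covNumber ε S = genCov (fun U => Metric.diam U < ε) S := rfl

section Master

variable {M N T : Type*} [MetricSpace M] [TopologicalSpace N] [TopologicalSpace T] [T2Space T]

/-- The "bad" set: the graph of `φ`, viewed inside `N × T`. -/
def badSet (K : Set N) (φ : C(K, T)) : Set (N × T) :=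
  (fun q : K × T => ((q.1 : N), q.2)) '' {q : K × T | φ q.1 = q.2}

lemma isClosed_badSet (K : Set N) (hK : IsClosed K) (φ : C(K, T)) :
    IsClosed (badSet K φ) := by
  have hemb : IsClosedEmbedding (fun q : K × T => ((q.1 : N), q.2)) := by
    refine ⟨hK.isClosedEmbedding_subtypeVal.isEmbedding.prodMap IsEmbedding.id, ?_⟩
    have : Set.range (fun q : K × T => ((q.1 : N), q.2)) = K ×ˢ Set.univ := by
      ext ⟨y, t⟩
      simp [Set.mem_prod]
    rw [this]
    exact hK.prod isClosed_univ
  exact hemb.isClosedMap _ (isClosed_eq (φ.continuous.comp continuous_fst) continuous_snd)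

lemma mem_badSet_iff (K : Set N) (φ : C(K, T)) (y : N) (t : T) :
    (y, t) ∈ badSet K φ ↔ y ∈ Subtype.val '' ((⇑φ) ⁻¹' {t}) := by
  constructor
  · rintro ⟨⟨k, t'⟩, hφ, h⟩
    obtain ⟨h1, h2⟩ := Prod.mk.injEq .. ▸ h
    refine ⟨k, ?_, h1⟩
    rw [Set.mem_preimage, Set.mem_singleton_iff, ← h2]
    exact hφ
  · rintro ⟨k, hk, rfl⟩
    exact ⟨(k, t), by simpa using hk, rfl⟩

/-- Master upper semicontinuity lemma. -/
lemma usc_genCov (K : Set N) (hK : IsClosed K) (φ : C(K, T))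
    (A : Set M) (hA : IsCompact A) (P : Set M → Prop) :
    UpperSemicontinuous (fun p : C(M, N) × T =>
      genCov P ((⇑p.1) ⁻¹' (Subtype.val '' ((⇑φ) ⁻¹' {p.2})) ∩ A)) := by
  intro p c hc
  obtain ⟨-, ⟨𝒰, ⟨h𝒰, hcov⟩, rfl⟩, hlt⟩ := sInf_lt_iff.mp hc
  set U : Set M := ⋃ V ∈ 𝒰, V with hU
  have hUopen : IsOpen U := isOpen_biUnion fun V hV => (h𝒰 V hV).1
  set C : Set M := A \ U with hCdef
  have hC : IsCompact C := hA.diff hUopen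
  -- the image of C avoids the bad set
  have hdisj : ((⇑p.1) '' C) ×ˢ ({p.2} : Set T) ⊆ (badSet K φ)ᶜ := by
    rintro ⟨y, t⟩ ⟨⟨x, hxC, rfl⟩, ht⟩ hbad
    rcases ht with rfl
    rw [mem_badSet_iff] at hbad
    exact hxC.2 (hcov ⟨hbad, hxC.1⟩)
  obtain ⟨O, W, hO, hW, hsO, htW, hOW⟩ :=
    generalized_tube_lemma (hC.image p.1.continuous) isCompact_singleton
      (isClosed_badSet K hK φ).isOpen_compl hdisj
  have hmem : p ∈ {f : C(M, N) | Set.MapsTo f C O} ×ˢ W := by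
    refine ⟨fun x hx => hsO ⟨x, hx, rfl⟩, htW rfl⟩
  have hopen : IsOpen ({f : C(M, N) | Set.MapsTo f C O} ×ˢ W) :=
    (ContinuousMap.isOpen_setOf_mapsTo hC hO).prod hW
  filter_upwards [hopen.mem_nhds hmem] with q hq
  refine lt_of_le_of_lt (sInf_le ⟨𝒰, ⟨h𝒰, ?_⟩, rfl⟩) hlt
  rintro x ⟨hx1, hx2⟩
  by_contra hxU
  have hxC : x ∈ C := ⟨hx2, hxU⟩
  have : (q.1 x, q.2) ∈ (badSet K φ)ᶜ := hOW ⟨hq.1 hxC, hq.2⟩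
  exact this ((mem_badSet_iff K φ _ _).mpr hx1)

end Master

section Encard

variable {M : Type*} [MetricSpace M]

/-- Separation constant for a finite set. -/
lemma exists_sep (t : Finset M) :
    ∃ δ > (0 : ℝ), ∀ x ∈ t, ∀ y ∈ t, x ≠ y → δ ≤ dist x y := by
  classical
  set D : Finset ℝ :=
    ((t ×ˢ t).filter (fun q => q.1 ≠ q.2)).image (fun q => dist q.1 q.2) with hD
  rcases D.eq_empty_or_nonempty with hDe | hDne
  · refine ⟨1, one_pos, fun x hx y hy hxy => ?_⟩
    exfalso
    have : dist x y ∈ D := Finset.mem_image.mpr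
      ⟨(x, y), Finset.mem_filter.mpr ⟨Finset.mem_product.mpr ⟨hx, hy⟩, hxy⟩, rfl⟩
    simp [hDe] at this
  · refine ⟨D.min' hDne, ?_, fun x hx y hy hxy => ?_⟩
    · obtain ⟨⟨a, b⟩, hab, heq⟩ := Finset.mem_image.mp (D.min'_mem hDne)
      rw [← heq]
      exact dist_pos.mpr (Finset.mem_filter.mp hab).2
    · exact Finset.min'_le _ _ (Finset.mem_image.mpr
        ⟨(x, y), Finset.mem_filter.mpr ⟨Finset.mem_product.mpr ⟨hx, hy⟩, hxy⟩, rfl⟩)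

/-- A separated finset inside `S` bounds `genCov` from below. -/
lemma card_le_genCov {ε : ℝ} (S : Set M) (t : Finset M) (htS : ↑t ⊆ S)
    (hsep : ∀ x ∈ t, ∀ y ∈ t, x ≠ y → ε ≤ dist x y) :
    (t.card : ENNReal) ≤ genCov (fun U => Bornology.IsBounded U ∧ Metric.diam U < ε) S := by
  classical
  apply le_sInf
  rintro - ⟨𝒰, ⟨h𝒰, hcov⟩, rfl⟩
  have hex : ∀ x : M, ∃ V : Set M, x ∈ t → V ∈ 𝒰 ∧ x ∈ V := by
    intro x
    by_cases hx : x ∈ t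
    · have : (x : M) ∈ ⋃ V ∈ 𝒰, V := hcov (htS hx)
      obtain ⟨V, hV, hxV⟩ := Set.mem_iUnion₂.mp this
      exact ⟨V, fun _ => ⟨hV, hxV⟩⟩
    · exact ⟨∅, fun h => absurd h hx⟩
  choose f hf using hex
  refine Nat.cast_le.mpr (Finset.card_le_card_of_injOn f (fun x hx => (hf x hx).1) ?_)
  intro x hx y hy hfxy
  by_contra hxy
  have hx' := (hf x hx).2
  have hy' := (hf y hy).2
  rw [hfxy] at hx'
  obtain ⟨hbd, hdiam⟩ := (h𝒰 _ (hf y hy).1).2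
  have h1 : dist x y ≤ Metric.diam (f y) := Metric.dist_le_diam_of_mem hbd hx' hy'
  have h2 : ε ≤ dist x y := hsep x hx y hy hxy
  linarith

/-- The cardinality equals the sup of generalized covering numbers. -/
lemma encard_eq_iSup_genCov (S : Set M) :
    (S.encard : ENNReal) = ⨆ n : ℕ,
      genCov (fun U => Bornology.IsBounded U ∧ Metric.diam U < 1 / (n + 1)) S := by
  have key : ∀ t : Finset M, ↑t ⊆ S → (t.card : ENNReal) ≤ ⨆ n : ℕ,
      genCov (fun U => Bornology.IsBounded U ∧ Metric.diam U < 1 / (n + 1)) S := by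
    intro t htS
    obtain ⟨δ, hδ, hsep⟩ := exists_sep t
    obtain ⟨n, hn⟩ := exists_nat_one_div_lt hδ
    refine le_trans (card_le_genCov (ε := 1 / (n + 1)) S t htS
      fun x hx y hy hxy => le_trans hn.le (hsep x hx y hy hxy))
      (le_iSup (fun n : ℕ => genCov
        (fun U => Bornology.IsBounded U ∧ Metric.diam U < 1 / (n + 1)) S) n)
  apply le_antisymm
  · rcases S.finite_or_infinite with hS | hS
    · rw [hS.encard_eq_coe_toFinset_card]
      have : ((hS.toFinset.card : ℕ∞) : ENNReal) = (hS.toFinset.card : ENNReal) := by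
        simp
      rw [this]
      exact key hS.toFinset (by simp)
    · rw [hS.encard_eq]
      by_contra h
      have hne : (⨆ n : ℕ, genCov
          (fun U => Bornology.IsBounded U ∧ Metric.diam U < 1 / (n + 1)) S) ≠ ⊤ := by
        intro heq
        exact h (by rw [heq]; simp)
      obtain ⟨k, hk⟩ := ENNReal.exists_nat_gt hne
      obtain ⟨t, htS, htcard⟩ := hS.exists_subset_card_eq k
      have := key t htS
      rw [htcard] at this
      exact absurd (lt_of_le_of_lt this hk) (lt_irrefl _)
  · apply iSup_le
    intro n
    rcases S.finite_or_infinite with hS | hS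
    · classical
      set r : ℝ := 1 / (3 * (n + 1)) with hr
      have hrpos : 0 < r := by positivity
      set 𝒰 : Finset (Set M) := hS.toFinset.image (fun s => Metric.ball s r) with h𝒰
      have hle : genCov (fun U => Bornology.IsBounded U ∧ Metric.diam U < 1 / (n + 1)) S ≤
          (𝒰.card : ENNReal) := by
        apply sInf_le
        refine ⟨𝒰, ⟨?_, ?_⟩, rfl⟩
        · intro U hU
          obtain ⟨s, -, rfl⟩ := Finset.mem_image.mp hU
          refine ⟨Metric.isOpen_ball, Metric.isBounded_ball, ?_⟩
          calc Metric.diam (Metric.ball s r) ≤ 2 * r := Metric.diam_ball hrpos.le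
            _ < 1 / (n + 1) := by
              have h0 : (0 : ℝ) < (n : ℝ) + 1 := by positivity
              rw [hr, mul_one_div, div_lt_div_iff₀ (by positivity) h0]
              nlinarith
        · intro x hx
          exact Set.mem_biUnion (Finset.mem_image.mpr ⟨x, hS.mem_toFinset.mpr hx, rfl⟩)
            (Metric.mem_ball_self hrpos)
      refine hle.trans ?_
      rw [hS.encard_eq_coe_toFinset_card]
      have h1 : 𝒰.card ≤ hS.toFinset.card := Finset.card_image_le
      have : ((hS.toFinset.card : ℕ∞) : ENNReal) = (hS.toFinset.card : ENNReal) := by simp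
      rw [this]
      exact_mod_cast h1
    · rw [hS.encard_eq]
      simp

end Encard

/-- Let `M, N, T` be metrizable (with a fixed metric on `M`), `K ⊆ N`
closed, `φ : K → T` continuous, and `A ⊆ M` compact. Then
`(f, t) ↦ #(f⁻¹(φ⁻¹(t)) ∩ A)` is Borel measurable on `C(M, N) × T` (with the
compact-open topology on `C(M, N)`), and for every `ε > 0` the function
`(f, t) ↦ #_ε(f⁻¹(φ⁻¹(t)) ∩ A)` is upper semicontinuous. -/
theorem stmt_8 {M N T : Type*} [MetricSpace M]
    [TopologicalSpace N] [TopologicalSpace.MetrizableSpace N]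
    [TopologicalSpace T] [TopologicalSpace.MetrizableSpace T]
    [MeasurableSpace (C(M, N) × T)] [BorelSpace (C(M, N) × T)]
    (K : Set N) (hK : IsClosed K) (φ : C(K, T))
    (A : Set M) (hA : IsCompact A) :
    Measurable (fun p : C(M, N) × T =>
      (((⇑p.1) ⁻¹' (Subtype.val '' ((⇑φ) ⁻¹' {p.2})) ∩ A).encard : ENNReal)) ∧
    ∀ ε : ℝ, 0 < ε → UpperSemicontinuous (fun p : C(M, N) × T =>
      covNumber ε ((⇑p.1) ⁻¹' (Subtype.val '' ((⇑φ) ⁻¹' {p.2})) ∩ A)) := by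
  constructor
  · have heq : (fun p : C(M, N) × T =>
        (((⇑p.1) ⁻¹' (Subtype.val '' ((⇑φ) ⁻¹' {p.2})) ∩ A).encard : ENNReal)) =
        fun p : C(M, N) × T => ⨆ n : ℕ, genCov
          (fun U => Bornology.IsBounded U ∧ Metric.diam U < 1 / ((n : ℝ) + 1))
          ((⇑p.1) ⁻¹' (Subtype.val '' ((⇑φ) ⁻¹' {p.2})) ∩ A) :=
      funext fun p => encard_eq_iSup_genCov _
    have h2 : Measurable (fun p : C(M, N) × T => ⨆ n : ℕ, genCov
        (fun U => Bornology.IsBounded U ∧ Metric.diam U < 1 / ((n : ℝ) + 1))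
        ((⇑p.1) ⁻¹' (Subtype.val '' ((⇑φ) ⁻¹' {p.2})) ∩ A)) :=
      Measurable.iSup fun n =>
        (usc_genCov K hK φ A hA
          (fun U => Bornology.IsBounded U ∧ Metric.diam U < 1 / ((n : ℝ) + 1))).measurable
    exact heq ▸ h2
  · intro ε hε
    have h3 := usc_genCov K hK φ A hA (fun U => Metric.diam U < ε) (M := M) (N := N) (T := T)
    exact h3
end

section
/- Let E be a finite-dimensional real inner product space and let V, W ⊆ E be linear subspaces with V ⊄ W and W ⊄ V (so also Vᗮ ⊄ Wᗮ and Wᗮ ⊄ Vᗮ). Let v₁, …, v_a be an orthonormal basis of V ∩ (V ∩ W)ᗮ and w₁, …, w_b an orthonormal basis of W ∩ (V ∩ W)ᗮ, and likewise let v'₁, …, v'_{a'} be an orthonormal basis of Vᗮ ∩ (Vᗮ ∩ Wᗮ)ᗮ and w'₁, …, w'_{b'} an orthonormal basis of Wᗮ ∩ (Vᗮ ∩ Wᗮ)ᗮ. Then the Gram determinants of the two concatenated systems coincide: det(⟨z_i, z_j⟩)_{i,j}, where (z_1,…,z_{a+b}) = (v₁,…,v_a, w₁,…,w_b), equals det(⟨z'_i,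 z'_j⟩)_{i,j}, where (z'_1,…,z'_{a'+b'}) = (v'₁,…,v'_{a'}, w'₁,…,w'_{b'}). Equivalently, the angle between subspaces satisfies σ(Vᗮ, Wᗮ) = σ(V, W). -/
open scoped RealInnerProductSpace
open Submodule Module Matrix

section Aux
variable {E : Type*} [NormedAddCommGroup E] [InnerProductSpace ℝ E]

private lemma span_repr_aux {ι : Type*} [Fintype ι] [DecidableEq ι] {e : ι → E}
    (he : Orthonormal ℝ e) {x : E} (hx : x ∈ Submodule.span ℝ (Set.range e)) :
    x = ∑ i, ⟪e i, x⟫ • e i := by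
  have hite := orthonormal_iff_ite.mp he
  set y := ∑ i, ⟪e i, x⟫ • e i with hy
  have hyx : x - y ∈ (Submodule.span ℝ (Set.range e))ᗮ := by
    rw [Submodule.mem_orthogonal]
    intro u hu
    induction hu using Submodule.span_induction with
    | mem u hu =>
      obtain ⟨j, rfl⟩ := hu
      rw [inner_sub_right]
      have : ⟪e j, y⟫ = ⟪e j, x⟫ := by
        rw [hy, inner_sum]
        simp only [real_inner_smul_right, hite]
        simp [Finset.sum_ite_eq]
      rw [this]; ring
    | zero => simp
    | add u₁ u₂ _ _ h1 h2 => rw [inner_add_left, h1, h2]; ring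
    | smul c u _ h => rw [inner_smul_left, h]; simp
  have hyy : x - y ∈ Submodule.span ℝ (Set.range e) := by
    refine Submodule.sub_mem _ hx (Submodule.sum_mem _ fun i _ => ?_)
    exact Submodule.smul_mem _ _ (Submodule.subset_span ⟨i, rfl⟩)
  have h0 : x - y = 0 := by
    have hb := (Submodule.span ℝ (Set.range e)).inf_orthogonal_eq_bot
    have hm : x - y ∈ (⊥ : Submodule ℝ E) := hb ▸ ⟨hyy, hyx⟩
    simpa using hm
  exact sub_eq_zero.mp h0

private lemma parseval_aux {ι : Type*} [Fintype ι] [DecidableEq ι] {e : ι → E}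
    (he : Orthonormal ℝ e) {x : E} (hx : x ∈ Submodule.span ℝ (Set.range e)) (y : E) :
    ⟪x, y⟫ = ∑ i, ⟪e i, x⟫ * ⟪e i, y⟫ := by
  conv_lhs => rw [span_repr_aux he hx]
  rw [sum_inner]
  exact Finset.sum_congr rfl fun i _ => real_inner_smul_left _ _ _

private lemma orthonormal_sum_elim {ι κ : Type*} {e : ι → E} {f : κ → E}
    (he : Orthonormal ℝ e) (hf : Orthonormal ℝ f)
    (hef : ∀ i j, ⟪e i, f j⟫ = 0) : Orthonormal ℝ (Sum.elim e f) := by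
  classical
  rw [orthonormal_iff_ite]
  have hie := orthonormal_iff_ite.mp he
  have hif := orthonormal_iff_ite.mp hf
  rintro (i | i) (j | j)
  · simpa using hie i j
  · simpa using hef i j
  · simpa [real_inner_comm] using hef j i
  · simpa using hif i j

private lemma key_sup [FiniteDimensional ℝ E] (V W : Submodule ℝ E) :
    (V ⊓ W)ᗮ ⊓ (Vᗮ ⊓ Wᗮ)ᗮ ≤ (W ⊓ (V ⊓ W)ᗮ) ⊔ (Wᗮ ⊓ (Vᗮ ⊓ Wᗮ)ᗮ) := by
  rintro x ⟨hx1, hx2⟩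
  set y : E := (orthogonalProjection W x : E) with hy
  have hyW : y ∈ W := (orthogonalProjection W x).2
  have hyU : y ∈ (V ⊓ W)ᗮ := by
    rw [Submodule.mem_orthogonal]
    intro u hu
    have h1 : (orthogonalProjection W u : E) = u :=
      (Submodule.starProjection_eq_self_iff).mpr hu.2
    calc ⟪u, y⟫ = ⟪(orthogonalProjection W u : E), x⟫ := by
          rw [hy]; exact (W.inner_starProjection_left_eq_right u x).symm
      _ = ⟪u, x⟫ := by rw [h1]
      _ = 0 := hx1 u hu
  have hzW : x - y ∈ Wᗮ := Submodule.sub_starProjection_mem_orthogonal x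
  have hyU' : y ∈ (Vᗮ ⊓ Wᗮ)ᗮ :=
    (le_trans W.le_orthogonal_orthogonal (Submodule.orthogonal_le inf_le_right)) hyW
  have hzU' : x - y ∈ (Vᗮ ⊓ Wᗮ)ᗮ := Submodule.sub_mem _ hx2 hyU'
  have hxeq : x = y + (x - y) := by abel
  rw [hxeq]
  exact Submodule.add_mem_sup ⟨hyW, hyU⟩ ⟨hzW, hzU'⟩

end Aux

/-- Let `V, W` be subspaces of a finite-dimensional real inner product
space with `V ⊄ W` and `W ⊄ V`. Given orthonormal bases `v` of `V ⊓ (V ⊓ W)ᗮ`, `w` of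
`W ⊓ (V ⊓ W)ᗮ`, `v'` of `Vᗮ ⊓ (Vᗮ ⊓ Wᗮ)ᗮ` and `w'` of `Wᗮ ⊓ (Vᗮ ⊓ Wᗮ)ᗮ`, the Gram
determinants of the concatenated systems `(v, w)` and `(v', w')` coincide; equivalently,
`σ(Vᗮ, Wᗮ) = σ(V, W)`. -/
theorem stmt_19 {E : Type*} [NormedAddCommGroup E] [InnerProductSpace ℝ E]
    [FiniteDimensional ℝ E]
    (V W : Submodule ℝ E) (hVW : ¬V ≤ W) (hWV : ¬W ≤ V)
    {a b a' b' : ℕ}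
    (v : Fin a → E) (w : Fin b → E) (v' : Fin a' → E) (w' : Fin b' → E)
    (hv : Orthonormal ℝ v) (hw : Orthonormal ℝ w)
    (hv' : Orthonormal ℝ v') (hw' : Orthonormal ℝ w')
    (hvs : Submodule.span ℝ (Set.range v) = V ⊓ (V ⊓ W)ᗮ)
    (hws : Submodule.span ℝ (Set.range w) = W ⊓ (V ⊓ W)ᗮ)
    (hvs' : Submodule.span ℝ (Set.range v') = Vᗮ ⊓ (Vᗮ ⊓ Wᗮ)ᗮ)
    (hws' : Submodule.span ℝ (Set.range w') = Wᗮ ⊓ (Vᗮ ⊓ Wᗮ)ᗮ) :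
    (Matrix.of fun i j : Fin (a + b) =>
        ⟪Fin.append v w i, Fin.append v w j⟫).det =
      (Matrix.of fun i j : Fin (a' + b') =>
        ⟪Fin.append v' w' i, Fin.append v' w' j⟫).det := by
  classical
  -- memberships
  have hvV : ∀ i, v i ∈ V ⊓ (V ⊓ W)ᗮ := fun i => hvs ▸ subset_span ⟨i, rfl⟩
  have hwW : ∀ i, w i ∈ W ⊓ (V ⊓ W)ᗮ := fun i => hws ▸ subset_span ⟨i, rfl⟩
  have hvV' : ∀ i, v' i ∈ Vᗮ ⊓ (Vᗮ ⊓ Wᗮ)ᗮ := fun i => hvs' ▸ subset_span ⟨i, rfl⟩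
  have hwW' : ∀ i, w' i ∈ Wᗮ ⊓ (Vᗮ ⊓ Wᗮ)ᗮ := fun i => hws' ▸ subset_span ⟨i, rfl⟩
  -- dimensions: a = b'
  have ha : a = b' := by
    have h1 : finrank ℝ (V ⊓ W : Submodule ℝ E) +
        finrank ℝ ((V ⊓ W)ᗮ ⊓ V : Submodule ℝ E) = finrank ℝ V :=
      Submodule.finrank_add_inf_finrank_orthogonal inf_le_left
    have h2 : finrank ℝ (Vᗮ ⊓ Wᗮ : Submodule ℝ E) +
        finrank ℝ ((Vᗮ ⊓ Wᗮ)ᗮ ⊓ Wᗮ : Submodule ℝ E) = finrank ℝ Wᗮ :=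
      Submodule.finrank_add_inf_finrank_orthogonal inf_le_right
    have h3 : finrank ℝ W + finrank ℝ Wᗮ = finrank ℝ E :=
      W.finrank_add_finrank_orthogonal
    have h4 : finrank ℝ (V ⊔ W : Submodule ℝ E) +
        finrank ℝ (Vᗮ ⊓ Wᗮ : Submodule ℝ E) = finrank ℝ E := by
      rw [Submodule.inf_orthogonal]
      exact (V ⊔ W).finrank_add_finrank_orthogonal
    have h5 : finrank ℝ (V ⊔ W : Submodule ℝ E) +
        finrank ℝ (V ⊓ W : Submodule ℝ E) = finrank ℝ V + finrank ℝ W :=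
      Submodule.finrank_sup_add_finrank_inf_eq V W
    have h6 : finrank ℝ (V ⊓ (V ⊓ W)ᗮ : Submodule ℝ E) = a := by
      rw [← hvs, finrank_span_eq_card hv.linearIndependent, Fintype.card_fin]
    have h7 : finrank ℝ (Wᗮ ⊓ (Vᗮ ⊓ Wᗮ)ᗮ : Submodule ℝ E) = b' := by
      rw [← hws', finrank_span_eq_card hw'.linearIndependent, Fintype.card_fin]
    rw [inf_comm] at h6 h7
    omega
  subst ha
  -- combined orthonormal families
  have o_ww' : Orthonormal ℝ (Sum.elim w w') :=
    orthonormal_sum_elim hw hw' fun i j => (hwW' j).1 _ (hwW i).1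
  have o_vv' : Orthonormal ℝ (Sum.elim v v') :=
    orthonormal_sum_elim hv hv' fun i j => (hvV' j).1 _ (hvV i).1
  -- spans of combined families
  have hspan_ww' : Submodule.span ℝ (Set.range (Sum.elim w w')) =
      (W ⊓ (V ⊓ W)ᗮ) ⊔ (Wᗮ ⊓ (Vᗮ ⊓ Wᗮ)ᗮ) := by
    rw [Set.Sum.elim_range, Submodule.span_union, hws, hws']
  have hspan_vv' : Submodule.span ℝ (Set.range (Sum.elim v v')) =
      (V ⊓ (V ⊓ W)ᗮ) ⊔ (Vᗮ ⊓ (Vᗮ ⊓ Wᗮ)ᗮ) := by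
    rw [Set.Sum.elim_range, Submodule.span_union, hvs, hvs']
  have hVle : V ≤ (Vᗮ ⊓ Wᗮ)ᗮ :=
    le_trans V.le_orthogonal_orthogonal (Submodule.orthogonal_le inf_le_left)
  have hmem_v : ∀ i, v i ∈ Submodule.span ℝ (Set.range (Sum.elim w w')) := by
    intro i
    rw [hspan_ww']
    exact key_sup V W ⟨(hvV i).2, hVle (hvV i).1⟩
  have hmem_w' : ∀ j, w' j ∈ Submodule.span ℝ (Set.range (Sum.elim v v')) := by
    intro j
    have hk := key_sup W V
    rw [inf_comm W V, inf_comm Wᗮ Vᗮ] at hk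
    rw [hspan_vv']
    exact hk ⟨Submodule.orthogonal_le inf_le_right (hwW' j).1, (hwW' j).2⟩
  -- matrices
  have hvite := orthonormal_iff_ite.mp hv
  have hwite := orthonormal_iff_ite.mp hw
  have hvite' := orthonormal_iff_ite.mp hv'
  have hwite' := orthonormal_iff_ite.mp hw'
  set C : Matrix (Fin a) (Fin b) ℝ := Matrix.of fun i j => ⟪v i, w j⟫ with hC
  set C' : Matrix (Fin a') (Fin a) ℝ := Matrix.of fun i j => ⟪v' i, w' j⟫ with hC'
  set K : Matrix (Fin a) (Fin a) ℝ := Matrix.of fun i j => ⟪v i, w' j⟫ with hK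
  have hL : (Matrix.of fun i j : Fin (a + b) =>
        ⟪Fin.append v w i, Fin.append v w j⟫).det =
      (Matrix.fromBlocks (1 : Matrix (Fin a) (Fin a) ℝ) C Cᵀ 1).det := by
    rw [← Matrix.det_submatrix_equiv_self finSumFinEquiv]
    congr 1
    ext i j
    rcases i with i | i <;> rcases j with j | j <;>
      simp [Matrix.submatrix_apply, finSumFinEquiv_apply_left, finSumFinEquiv_apply_right,
        Fin.append_left, Fin.append_right, Matrix.one_apply, hvite, hwite, hC,
        real_inner_comm]
  have hR : (Matrix.of fun i j : Fin (a' + a) =>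
        ⟪Fin.append v' w' i, Fin.append v' w' j⟫).det =
      (Matrix.fromBlocks (1 : Matrix (Fin a') (Fin a') ℝ) C' C'ᵀ 1).det := by
    rw [← Matrix.det_submatrix_equiv_self finSumFinEquiv]
    congr 1
    ext i j
    rcases i with i | i <;> rcases j with j | j <;>
      simp [Matrix.submatrix_apply, finSumFinEquiv_apply_left, finSumFinEquiv_apply_right,
        Fin.append_left, Fin.append_right, Matrix.one_apply, hvite', hwite', hC',
        real_inner_comm]
  have hKK : (1 : Matrix (Fin a) (Fin a) ℝ) - C * Cᵀ = K * Kᵀ := by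
    ext i k
    have hp := parseval_aux o_ww' (hmem_v i) (v k)
    simp only [Fintype.sum_sum_type, Sum.elim_inl, Sum.elim_inr] at hp
    have hs1 : ∑ j, ⟪w j, v i⟫ * ⟪w j, v k⟫ = ∑ j, ⟪v i, w j⟫ * ⟪v k, w j⟫ :=
      Finset.sum_congr rfl fun j _ => by
        rw [real_inner_comm (w j) (v i), real_inner_comm (w j) (v k)]
    have hs2 : ∑ j, ⟪w' j, v i⟫ * ⟪w' j, v k⟫ = ∑ j, ⟪v i, w' j⟫ * ⟪v k, w' j⟫ :=
      Finset.sum_congr rfl fun j _ => by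
        rw [real_inner_comm (w' j) (v i), real_inner_comm (w' j) (v k)]
    rw [hs1, hs2] at hp
    have hvv : ⟪v i, v k⟫ = (if i = k then (1:ℝ) else 0) := hvite i k
    simp only [Matrix.sub_apply, Matrix.mul_apply, Matrix.one_apply,
      Matrix.transpose_apply, hC, hK, Matrix.of_apply]
    rw [← hvv, hp]
    ring
  have hKK' : (1 : Matrix (Fin a) (Fin a) ℝ) - C'ᵀ * C' = Kᵀ * K := by
    ext j l
    have hp := parseval_aux o_vv' (hmem_w' j) (w' l)
    simp only [Fintype.sum_sum_type, Sum.elim_inl, Sum.elim_inr] at hp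
    have hww : ⟪w' j, w' l⟫ = (if j = l then (1:ℝ) else 0) := hwite' j l
    simp only [Matrix.sub_apply, Matrix.mul_apply, Matrix.one_apply,
      Matrix.transpose_apply, hC', hK, Matrix.of_apply]
    rw [← hww, hp]
    ring
  rw [hL, hR, Matrix.det_fromBlocks_one₂₂, Matrix.det_fromBlocks_one₁₁, hKK, hKK',
    Matrix.det_mul, Matrix.det_mul, Matrix.det_transpose, mul_comm]
end
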